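/- If d > r − 1, the subspace of locally polynomial functions ℤ_p → E of degree at most d is dense in the Banach space C^r(ℤ_p, E). -/

import Mathlib

set_option linter.unusedSectionVars false

open Filter Classical

variable (p : ℕ) [Fact p.Prime] (E : Type*) [NontriviallyNormedField E]
  [NormedAlgebra ℚ_[p] E] [FiniteDimensional ℚ_[p] E]

/-- The Mahler coefficients `a_n(f) = ∑_{i=0}^n (-1)^i C(n,i) f(n-i)`. -/
noncomputable def mahlerCoeff (f : ℤ_[p] → E) (n : ℕ) : E :=
  ∑ i ∈ Finset.range (n + 1), (-1 : E) ^ i * (n.choose i : E) * f ((n - i : ℕ) : ℤ_[p])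

/-- `f : ℤ_p → E` is of class `C^r` if `n^r |a_n(f)| → 0`. -/
def IsCr (r : ℝ) (f : ℤ_[p] → E) : Prop :=
  Tendsto (fun n : ℕ => (n : ℝ) ^ r * ‖mahlerCoeff p E f n‖) atTop (nhds (0 : ℝ))

/-- The norm `‖f‖_r = sup_n (n+1)^r |a_n(f)|`. -/
noncomputable def crNorm (r : ℝ) (f : ℤ_[p] → E) : ℝ :=
  ⨆ n : ℕ, ((n : ℝ) + 1) ^ r * ‖mahlerCoeff p E f n‖

/-- The locally polynomial function `(z-a)^j 𝟙_{a + pⁿℤ_p}`. -/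
noncomputable def indPoly (a : ℤ_[p]) (n j : ℕ) : ℤ_[p] → E := fun z =>
  if ‖z - a‖ ≤ (p : ℝ) ^ (-(n : ℤ)) then (algebraMap ℚ_[p] E ((z : ℚ_[p]) - (a : ℚ_[p]))) ^ j
  else 0

/-- The space of locally polynomial functions `ℤ_p → E` of degree at most `d`. -/
noncomputable def LocPoly (d : ℕ) : Submodule E (ℤ_[p] → E) :=
  Submodule.span E {g | ∃ (a : ℤ_[p]) (n j : ℕ), j ≤ d ∧ g = indPoly p E a n j}

/-! ### Auxiliary lemmas -/

open fwdDiff Polynomial Finset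

/-- The inclusion `ℤ_[p] →+* E`. -/
noncomputable def emb : ℤ_[p] →+* E := (algebraMap ℚ_[p] E).comp (PadicInt.Coe.ringHom)

lemma emb_apply (x : ℤ_[p]) : emb p E x = algebraMap ℚ_[p] E (x : ℚ_[p]) := rfl

lemma norm_emb (x : ℤ_[p]) : ‖emb p E x‖ = ‖x‖ := by
  rw [emb_apply, norm_algebraMap', PadicInt.norm_def]

include p in
lemma norm_natCast_le_one (n : ℕ) : ‖(n : E)‖ ≤ 1 := by
  have h : ((n : E)) = emb p E (n : ℤ_[p]) := by simp [emb_apply]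
  rw [h, norm_emb]
  exact PadicInt.norm_le_one _

include p in
lemma norm_intCast_le_one (n : ℤ) : ‖(n : E)‖ ≤ 1 := by
  have h : ((n : E)) = emb p E (n : ℤ_[p]) := by simp [emb_apply]
  rw [h, norm_emb]
  exact PadicInt.norm_le_one _

include p in
lemma ultraE : IsUltrametricDist E :=
  IsUltrametricDist.isUltrametricDist_of_forall_norm_natCast_le_one (norm_natCast_le_one p E)

lemma mahlerCoeff_eq_sum (f : ℤ_[p] → E) (n : ℕ) :
    mahlerCoeff p E f n
      = ∑ k ∈ Finset.range (n + 1), (((-1 : ℤ) ^ (n - k) * n.choose k : ℤ)) • f (k : ℤ_[p]) := by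
  rw [mahlerCoeff, ← Finset.sum_range_reflect]
  refine Finset.sum_congr rfl fun k hk => ?_
  have hk' : k ≤ n := Nat.lt_succ_iff.mp (Finset.mem_range.mp hk)
  simp only [Nat.add_sub_cancel]
  rw [Nat.choose_symm hk', Nat.sub_sub_self hk', zsmul_eq_mul]
  push_cast
  ring

lemma mahlerCoeff_eq_fwdDiff (f : ℤ_[p] → E) (n : ℕ) :
    mahlerCoeff p E f n = (fwdDiff (1 : ℤ_[p]))^[n] f 0 := by
  rw [mahlerCoeff_eq_sum, fwdDiff_iter_eq_sum_shift]
  refine Finset.sum_congr rfl fun k _ => ?_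
  congr 1
  simp [nsmul_eq_mul]

lemma mahlerCoeff_eq_natFwdDiff (f : ℤ_[p] → E) (n : ℕ) :
    mahlerCoeff p E f n = (fwdDiff (1 : ℕ))^[n] (fun k : ℕ => f (k : ℤ_[p])) 0 := by
  rw [mahlerCoeff_eq_sum, fwdDiff_iter_eq_sum_shift]
  refine Finset.sum_congr rfl fun k _ => ?_
  congr 1
  simp

/-- Mahler coefficient as a linear map. -/
noncomputable def mahlerCoeffₗ (n : ℕ) : (ℤ_[p] → E) →ₗ[E] E where
  toFun f := mahlerCoeff p E f n
  map_add' f g := by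
    simp only [mahlerCoeff, Pi.add_apply, mul_add, Finset.sum_add_distrib]
  map_smul' c f := by
    simp only [mahlerCoeff, Pi.smul_apply, smul_eq_mul, RingHom.id_apply, Finset.mul_sum]
    refine Finset.sum_congr rfl fun k _ => ?_
    ring

lemma mahlerCoeff_add (f g : ℤ_[p] → E) (n : ℕ) :
    mahlerCoeff p E (f + g) n = mahlerCoeff p E f n + mahlerCoeff p E g n :=
  (mahlerCoeffₗ p E n).map_add f g

lemma mahlerCoeff_smul (c : E) (f : ℤ_[p] → E) (n : ℕ) :
    mahlerCoeff p E (c • f) n = c * mahlerCoeff p E f n :=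
  (mahlerCoeffₗ p E n).map_smul c f

lemma mahlerCoeff_sub (f g : ℤ_[p] → E) (n : ℕ) :
    mahlerCoeff p E (f - g) n = mahlerCoeff p E f n - mahlerCoeff p E g n :=
  map_sub (mahlerCoeffₗ p E n) f g

lemma mahlerCoeff_sum {ι : Type*} (s : Finset ι) (F : ι → (ℤ_[p] → E)) (n : ℕ) :
    mahlerCoeff p E (∑ i ∈ s, F i) n = ∑ i ∈ s, mahlerCoeff p E (F i) n :=
  map_sum (mahlerCoeffₗ p E n) F s

lemma crNorm_le {r c : ℝ} {f : ℤ_[p] → E} (h0 : 0 ≤ c)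
    (hb : ∀ n : ℕ, ((n : ℝ) + 1) ^ r * ‖mahlerCoeff p E f n‖ ≤ c) :
    crNorm p E r f ≤ c :=
  Real.iSup_le hb h0

include p in
/-- Pointwise bounds are preserved by iterated forward differences. -/
lemma norm_fwdDiff_iter_le (h : ℤ_[p]) (f : ℤ_[p] → E) {c : ℝ} (h0 : 0 ≤ c)
    (hf : ∀ z, ‖f z‖ ≤ c) (n : ℕ) (z : ℤ_[p]) : ‖(fwdDiff h)^[n] f z‖ ≤ c := by
  haveI := ultraE p E
  rw [fwdDiff_iter_eq_sum_shift]
  refine IsUltrametricDist.norm_sum_le_of_forall_le_of_nonneg h0 fun i _ => ?_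
  rw [zsmul_eq_mul, norm_mul]
  have hmm := mul_le_mul (norm_intCast_le_one p E ((-1 : ℤ) ^ (n - i) * (n.choose i)))
    (hf (z + i • h)) (norm_nonneg _) zero_le_one
  simpa using hmm

/-- Each `z` lies in exactly one ball of radius `p^{-N}` centred at `a < p^N`. -/
lemma ball_cond_iff_appr {z : ℤ_[p]} {N : ℕ} {a : ℕ} (ha : a < p ^ N) :
    ‖z - (a : ℤ_[p])‖ ≤ (p : ℝ) ^ (-(N : ℤ)) ↔ a = z.appr N := by
  constructor
  · intro hz
    have h1 : ‖z - (z.appr N : ℤ_[p])‖ ≤ (p : ℝ) ^ (-(N : ℤ)) :=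
      (PadicInt.norm_le_pow_iff_mem_span_pow _ N).mpr (PadicInt.appr_spec N z)
    have h2 : ‖((a : ℤ_[p]) - (z.appr N : ℤ_[p]))‖ ≤ (p : ℝ) ^ (-(N : ℤ)) := by
      have : (a : ℤ_[p]) - (z.appr N : ℤ_[p]) = (z - (z.appr N : ℤ_[p])) + -(z - (a : ℤ_[p])) := by
        ring
      rw [this]
      refine le_trans (PadicInt.nonarchimedean _ _) (max_le h1 ?_)
      rwa [norm_neg]
    have h3 : ((p : ℤ) ^ N) ∣ ((a : ℤ) - (z.appr N : ℤ)) := by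
      rw [← PadicInt.norm_int_le_pow_iff_dvd]
      push_cast
      exact h2
    have h4 : ((a : ℤ) - (z.appr N : ℤ)) = 0 := by
      refine Int.eq_zero_of_abs_lt_dvd h3 ?_
      have hb : (z.appr N : ℤ) < (p : ℤ) ^ N := by exact_mod_cast PadicInt.appr_lt z N
      have ha2 : (a : ℤ) < (p : ℤ) ^ N := by exact_mod_cast ha
      have hple : (0:ℤ) ≤ (p:ℤ) ^ N := by positivity
      rw [abs_sub_lt_iff]
      omega
    omega
  · rintro rfl
    exact (PadicInt.norm_le_pow_iff_mem_span_pow _ N).mpr (PadicInt.appr_spec N z)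

/-- Locally polynomial function supported on the ball around `a`. -/
noncomputable def locp (a : ℤ_[p]) (N : ℕ) (Q : Polynomial ℤ_[p]) : ℤ_[p] → E := fun z =>
  if ‖z - a‖ ≤ (p : ℝ) ^ (-(N : ℤ)) then emb p E (Q.eval (z - a)) else 0

lemma indPoly_eq_locp (a : ℤ_[p]) (N j : ℕ) :
    indPoly p E a N j = locp p E a N (X ^ j) := by
  funext z
  simp only [indPoly, locp, eval_pow, eval_X, map_pow, emb_apply, PadicInt.coe_sub]

lemma locp_zero (a : ℤ_[p]) (N : ℕ) : locp p E a N 0 = 0 := by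
  funext z
  simp [locp]

lemma ball_cond_shift (a z : ℤ_[p]) (N : ℕ) :
    (‖z + (p : ℤ_[p]) ^ N - a‖ ≤ (p : ℝ) ^ (-(N : ℤ)) ↔ ‖z - a‖ ≤ (p : ℝ) ^ (-(N : ℤ))) := by
  have hc : ‖((p : ℤ_[p]) ^ N)‖ ≤ (p : ℝ) ^ (-(N : ℤ)) := le_of_eq (PadicInt.norm_p_pow N)
  constructor
  · intro h
    have : z - a = (z + (p : ℤ_[p]) ^ N - a) + -((p : ℤ_[p]) ^ N) := by ring
    rw [this]
    refine le_trans (PadicInt.nonarchimedean _ _) (max_le h ?_)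
    rwa [norm_neg]
  · intro h
    have : z + (p : ℤ_[p]) ^ N - a = (z - a) + (p : ℤ_[p]) ^ N := by ring
    rw [this]
    exact le_trans (PadicInt.nonarchimedean _ _) (max_le h hc)

lemma fwdDiff_locp (a : ℤ_[p]) (N : ℕ) (Q : Polynomial ℤ_[p]) :
    fwdDiff ((p : ℤ_[p]) ^ N) (locp p E a N Q)
      = locp p E a N (Q.comp (X + C ((p : ℤ_[p]) ^ N)) - Q) := by
  funext z
  simp only [fwdDiff, locp]
  by_cases h : ‖z - a‖ ≤ (p : ℝ) ^ (-(N : ℤ))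
  · rw [if_pos ((ball_cond_shift p a z N).mpr h), if_pos h, if_pos h, ← map_sub]
    congr 1
    have harg : z + (p : ℤ_[p]) ^ N - a = z - a + (p : ℤ_[p]) ^ N := by ring
    rw [eval_sub, eval_comp, eval_add, eval_X, eval_C, harg]
  · rw [if_neg (fun hc => h ((ball_cond_shift p a z N).mp hc)), if_neg h, if_neg h, sub_zero]

lemma fwdDiff_iter_locp_eq_zero (a : ℤ_[p]) (N : ℕ) :
    ∀ (k : ℕ) (Q : Polynomial ℤ_[p]), Q.natDegree ≤ k →
      (fwdDiff ((p : ℤ_[p]) ^ N))^[k + 1] (locp p E a N Q) = 0 := by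
  intro k
  induction k with
  | zero =>
    intro Q hQ
    have hQ' : Q = C (Q.coeff 0) := Polynomial.eq_C_of_natDegree_eq_zero (Nat.le_zero.mp hQ)
    rw [Function.iterate_one, fwdDiff_locp]
    rw [hQ']
    simp only [C_comp, sub_self, locp_zero]
  | succ k IH =>
    intro Q hQ
    rw [Function.iterate_succ_apply, fwdDiff_locp]
    set Q' : Polynomial ℤ_[p] := Q.comp (X + C ((p : ℤ_[p]) ^ N)) - Q with hQ'
    apply IH
    by_cases h0 : Q' = 0
    · simp [h0]
    by_cases hQd : Q.natDegree = 0
    · exfalso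
      apply h0
      rw [hQ', Polynomial.eq_C_of_natDegree_eq_zero hQd]
      simp
    have hcompdeg : (Q.comp (X + C ((p : ℤ_[p]) ^ N))).natDegree = Q.natDegree := by
      rw [Polynomial.natDegree_comp, Polynomial.natDegree_X_add_C, mul_one]
    have hQ0 : Q ≠ 0 := fun hc => hQd (by simp [hc])
    have hcomp0 : Q.comp (X + C ((p : ℤ_[p]) ^ N)) ≠ 0 := by
      intro hc
      rw [hc, Polynomial.natDegree_zero] at hcompdeg
      exact hQd hcompdeg.symm
    have hlead : (Q.comp (X + C ((p : ℤ_[p]) ^ N))).leadingCoeff = Q.leadingCoeff := by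
      rw [Polynomial.leadingCoeff_comp (by rw [Polynomial.natDegree_X_add_C]; exact one_ne_zero),
        Polynomial.leadingCoeff_X_add_C, one_pow, mul_one]
    have hdegeq : (Q.comp (X + C ((p : ℤ_[p]) ^ N))).degree = Q.degree := by
      rw [Polynomial.degree_eq_natDegree hcomp0, Polynomial.degree_eq_natDegree hQ0, hcompdeg]
    have hdeg : Q'.degree < Q.degree := by
      rw [← hdegeq]
      exact Polynomial.degree_sub_lt hdegeq hcomp0 hlead
    have := Polynomial.natDegree_lt_natDegree h0 hdeg
    omega

open fwdDiff_aux

/-- The forward-difference operator (step 1) as a `ℤ`-linear endomorphism. -/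
noncomputable def deltaL : Module.End ℤ (ℤ_[p] → E) := fwdDiffₗ ℤ_[p] E (1 : ℤ_[p])

/-- The forward-difference operator (step `p^N`) as a `ℤ`-linear endomorphism. -/
noncomputable def dL (N : ℕ) : Module.End ℤ (ℤ_[p] → E) := fwdDiffₗ ℤ_[p] E ((p : ℤ_[p]) ^ N)

/-- The lower-order part of `dL`. -/
noncomputable def popL (N : ℕ) : Module.End ℤ (ℤ_[p] → E) :=
  ∑ k ∈ Finset.Ico 1 (p ^ N), (deltaL p E) ^ k *
    ((p ^ N).choose k : Module.End ℤ (ℤ_[p] → E))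

lemma deltaL_pow_apply (n : ℕ) (f : ℤ_[p] → E) :
    ((deltaL p E) ^ n) f = (fwdDiff (1 : ℤ_[p]))^[n] f :=
  congr_fun (coe_fwdDiffₗ_pow (1 : ℤ_[p]) n) f

lemma dL_pow_apply (N n : ℕ) (f : ℤ_[p] → E) :
    ((dL p E N) ^ n) f = (fwdDiff ((p : ℤ_[p]) ^ N))^[n] f :=
  congr_fun (coe_fwdDiffₗ_pow ((p : ℤ_[p]) ^ N) n) f

include p in
lemma dL_eq (N : ℕ) : dL p E N = (deltaL p E) ^ (p ^ N) + popL p E N := by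
  have hP : 0 < p ^ N := pow_pos (Fact.out (p := p.Prime)).pos N
  have hD : dL p E N = shiftₗ ℤ_[p] E (1 : ℤ_[p]) ^ (p ^ N) - 1 := by
    apply LinearMap.ext; intro f
    funext z
    simp only [dL, fwdDiffₗ_apply, fwdDiff, LinearMap.sub_apply, Pi.sub_apply,
      Module.End.one_apply]
    rw [shiftₗ_pow_apply]
    congr 2
    rw [nsmul_eq_mul, mul_one]
    push_cast
    ring
  have hShift : shiftₗ ℤ_[p] E (1 : ℤ_[p]) ^ (p ^ N)
      = ∑ k ∈ Finset.range (p ^ N + 1),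
          (deltaL p E) ^ k * ((p ^ N).choose k : Module.End ℤ (ℤ_[p] → E)) := by
    have : shiftₗ ℤ_[p] E (1 : ℤ_[p]) = deltaL p E + 1 := rfl
    rw [this, (Commute.one_right (deltaL p E)).add_pow]
    refine Finset.sum_congr rfl fun k _ => ?_
    rw [one_pow, mul_one]
  rw [hD, hShift, Finset.sum_range_succ, Finset.range_eq_Ico,
    Finset.sum_eq_sum_Ico_succ_bot hP]
  simp only [Nat.choose_self, Nat.choose_zero_right, Nat.cast_one, mul_one, pow_zero, one_mul,
    zero_add]
  unfold popL
  abel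

include p in
lemma commute_dL_popL (N : ℕ) : Commute (dL p E N) (popL p E N) := by
  rw [dL_eq]
  refine Commute.add_left ?_ (Commute.refl _)
  refine Commute.sum_right _ _ _ fun k _ => ?_
  exact ((Commute.refl (deltaL p E)).pow_pow _ _).mul_right ((Nat.cast_commute _ _).symm)

include p in
lemma norm_choose_le_inv (N k : ℕ) (hk : k ∈ Finset.Ico 1 (p ^ N)) :
    ‖(((p ^ N).choose k : ℕ) : E)‖ ≤ (p : ℝ)⁻¹ := by
  obtain ⟨hk1, hk2⟩ := Finset.mem_Ico.mp hk
  have hdvd : p ∣ (p ^ N).choose k :=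
    Nat.Prime.dvd_choose_pow (Fact.out (p := p.Prime)) (by omega) (by omega)
  have h1 : ‖(((p ^ N).choose k : ℕ) : ℤ_[p])‖ ≤ (p : ℝ) ^ (-(1 : ℕ) : ℤ) := by
    rw [show ((((p ^ N).choose k : ℕ)) : ℤ_[p]) = (((((p ^ N).choose k : ℕ)) : ℤ) : ℤ_[p]) by
      push_cast; ring]
    rw [PadicInt.norm_int_le_pow_iff_dvd, pow_one]
    exact_mod_cast Int.natCast_dvd_natCast.mpr hdvd
  have h2 : (((p ^ N).choose k : ℕ) : E) = emb p E (((p ^ N).choose k : ℕ) : ℤ_[p]) := by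
    simp [emb_apply]
  rw [h2, norm_emb]
  calc ‖(((p ^ N).choose k : ℕ) : ℤ_[p])‖ ≤ (p : ℝ) ^ (-(1 : ℕ) : ℤ) := h1
    _ = (p : ℝ)⁻¹ := by norm_num

include p in
lemma norm_popL_pow_apply_le (N : ℕ) :
    ∀ (s : ℕ) (u : ℤ_[p] → E) (B : ℝ), 0 ≤ B → (∀ z, ‖u z‖ ≤ B) →
      ∀ z, ‖(((-(popL p E N)) ^ s) u) z‖ ≤ ((p : ℝ)⁻¹) ^ s * B := by
  haveI := ultraE p E
  have hp0 : (0 : ℝ) ≤ (p : ℝ)⁻¹ := by positivity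
  intro s
  induction s with
  | zero =>
    intro u B hB hu z
    simpa using hu z
  | succ s IH =>
    intro u B hB hu z
    have hstep : ∀ z, ‖((-(popL p E N)) u) z‖ ≤ (p : ℝ)⁻¹ * B := by
      intro w
      rw [LinearMap.neg_apply, Pi.neg_apply, norm_neg]
      have hPop : (popL p E N) u w
          = ∑ k ∈ Finset.Ico 1 (p ^ N),
              (((p ^ N).choose k : ℕ) • (((deltaL p E) ^ k) u)) w := by
        rw [popL, LinearMap.sum_apply, Finset.sum_apply]
        refine Finset.sum_congr rfl fun k _ => ?_
        rw [Module.End.mul_apply, Module.End.natCast_apply, map_nsmul]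
      rw [hPop]
      refine IsUltrametricDist.norm_sum_le_of_forall_le_of_nonneg (by positivity)
        fun k hk => ?_
      rw [Pi.smul_apply, nsmul_eq_mul, norm_mul]
      refine mul_le_mul (norm_choose_le_inv p E N k hk) ?_ (norm_nonneg _) hp0
      rw [deltaL_pow_apply]
      exact norm_fwdDiff_iter_le p E _ u hB hu k w
    have hpow : (((-(popL p E N)) ^ (s + 1)) u) = (((-(popL p E N)) ^ s) ((-(popL p E N)) u)) := by
      rw [pow_succ, Module.End.mul_apply]
    rw [hpow]
    have := IH ((-(popL p E N)) u) ((p : ℝ)⁻¹ * B) (by positivity) hstep z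
    calc ‖(((-(popL p E N)) ^ s) ((-(popL p E N)) u)) z‖ ≤ ((p : ℝ)⁻¹) ^ s * ((p : ℝ)⁻¹ * B) :=
      this
      _ = ((p : ℝ)⁻¹) ^ (s + 1) * B := by ring

include p in
/-- Key estimate: Mahler coefficients of `indPoly a N j` decay like `p^{-n/p^N}`. -/
lemma norm_mahlerCoeff_indPoly_le (a : ℤ_[p]) (N j n : ℕ) :
    ‖mahlerCoeff p E (indPoly p E a N j) n‖ ≤
      (p : ℝ) ^ ((j : ℤ) - (n / p ^ N : ℕ)) * ((p : ℝ) ^ (-(N : ℤ))) ^ j := by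
  haveI := ultraE p E
  have hp1 : (1 : ℝ) ≤ (p : ℝ) := by
    exact_mod_cast (Fact.out (p := p.Prime)).one_le
  have hp0 : (0 : ℝ) < (p : ℝ) := lt_of_lt_of_le zero_lt_one hp1
  set P : ℕ := p ^ N with hPdef
  have hP : 0 < P := pow_pos (Fact.out (p := p.Prime)).pos N
  set q : ℕ := n / P with hq
  set h : ℤ_[p] → E := indPoly p E a N j with hh
  set B : ℝ := ((p : ℝ) ^ (-(N : ℤ))) ^ j with hB
  have hB0 : 0 ≤ B := by positivity
  have hpt : ∀ z, ‖h z‖ ≤ B := by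
    intro z
    rw [hh, indPoly]
    split_ifs with hcond
    · rw [norm_pow, hB]
      refine pow_le_pow_left₀ (norm_nonneg _) ?_ j
      rw [norm_algebraMap', show ((z : ℚ_[p]) - (a : ℚ_[p])) = ((z - a : ℤ_[p]) : ℚ_[p]) from
        (PadicInt.coe_sub z a).symm, ← PadicInt.norm_def]
      exact hcond
    · simpa using hB0
  set τ : ℝ := (p : ℝ) ^ ((j : ℤ) - q) * B with hτ
  have hτ0 : 0 ≤ τ := by positivity
  -- main pointwise bound
  have hmain : ∀ z, ‖(fwdDiff (1 : ℤ_[p]))^[P * q] h z‖ ≤ τ := by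
    intro z
    rw [← deltaL_pow_apply, pow_mul, show (deltaL p E) ^ P = dL p E N + -(popL p E N) by
      rw [dL_eq]; abel]
    rw [((commute_dL_popL p E N).neg_right).add_pow q, LinearMap.sum_apply, Finset.sum_apply]
    refine IsUltrametricDist.norm_sum_le_of_forall_le_of_nonneg hτ0 fun l hl => ?_
    have hlq : l ≤ q := Nat.lt_succ_iff.mp (Finset.mem_range.mp hl)
    have hterm : ((dL p E N ^ l * (-(popL p E N)) ^ (q - l) * ((q.choose l : ℕ) :
        Module.End ℤ (ℤ_[p] → E))) h) z
        = (q.choose l : ℕ) • ((((-(popL p E N)) ^ (q - l)) ((dL p E N ^ l) h)) z) := by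
      rw [((commute_dL_popL p E N).neg_right.pow_pow l (q - l)).eq, Module.End.mul_apply,
        Module.End.mul_apply, Module.End.natCast_apply, map_nsmul, map_nsmul, Pi.smul_apply]
    rw [hterm, nsmul_eq_mul, norm_mul]
    have hcast : ‖((q.choose l : ℕ) : E)‖ ≤ 1 := norm_natCast_le_one p E _
    by_cases hlj : l ≤ j
    · -- small l : use the contraction estimate
      have hDl : ∀ w, ‖((dL p E N ^ l) h) w‖ ≤ B := by
        intro w
        rw [dL_pow_apply]
        exact norm_fwdDiff_iter_le p E _ h hB0 hpt l w
      have hPb := norm_popL_pow_apply_le p E N (q - l) ((dL p E N ^ l) h) B hB0 hDl z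
      have hle : ((p : ℝ)⁻¹) ^ (q - l) * B ≤ τ := by
        rw [hτ]
        refine mul_le_mul_of_nonneg_right ?_ hB0
        rw [← zpow_natCast ((p : ℝ)⁻¹) (q - l), inv_zpow, ← zpow_neg]
        refine zpow_le_zpow_right₀ hp1 ?_
        have : ((q - l : ℕ) : ℤ) = (q : ℤ) - l := by
          exact_mod_cast Int.ofNat_sub hlq
        omega
      calc ‖((q.choose l : ℕ) : E)‖ * ‖(((-(popL p E N)) ^ (q - l)) ((dL p E N ^ l) h)) z‖
          ≤ 1 * (((p : ℝ)⁻¹) ^ (q - l) * B) :=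
            mul_le_mul hcast hPb (norm_nonneg _) zero_le_one
        _ = ((p : ℝ)⁻¹) ^ (q - l) * B := one_mul _
        _ ≤ τ := hle
    · -- large l : the term vanishes
      have hDl : (dL p E N ^ l) h = 0 := by
        have hl' : l = (l - (j + 1)) + (j + 1) := by omega
        have h0 : (dL p E N ^ (j + 1)) h = 0 := by
          rw [dL_pow_apply, hh, indPoly_eq_locp]
          exact fwdDiff_iter_locp_eq_zero p E a N j (X ^ j) (Polynomial.natDegree_X_pow j).le
        rw [hl', pow_add, Module.End.mul_apply, h0, map_zero]
      rw [hDl, map_zero]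
      simpa using hτ0
  -- assemble
  rw [mahlerCoeff_eq_fwdDiff, show n = n % P + P * q by rw [hq, Nat.mod_add_div],
    Function.iterate_add_apply]
  exact norm_fwdDiff_iter_le p E _ _ hτ0 hmain (n % P) 0

/-- The Mahler basis function `z ↦ C(z, m)`, as a map `ℤ_[p] → E`. -/
noncomputable def binomE (m : ℕ) : ℤ_[p] → E := fun z =>
  (algebraMap ℚ_[p] E ((m.factorial : ℚ_[p])⁻¹)) • emb p E ((descPochhammer ℤ_[p] m).eval z)

include p in
lemma fwdDiff_iter_intCast (n : ℕ) (g : ℕ → ℤ) (y : ℕ) :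
    (fwdDiff (1 : ℕ))^[n] (fun k => ((g k : ℤ) : E)) y
      = (((fwdDiff (1 : ℕ))^[n] g y : ℤ) : E) := by
  induction n generalizing g with
  | zero => rfl
  | succ n IH =>
    rw [Function.iterate_succ_apply, Function.iterate_succ_apply]
    have hstep : fwdDiff (1 : ℕ) (fun k => ((g k : ℤ) : E))
        = fun k => (((fwdDiff (1 : ℕ) g) k : ℤ) : E) := by
      funext k
      simp [fwdDiff]
    rw [hstep]
    exact IH (fwdDiff (1 : ℕ) g)

lemma mahlerCoeff_binomE (m n : ℕ) :
    mahlerCoeff p E (binomE p E m) n = if n = m then 1 else 0 := by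
  have hsmul : binomE p E m
      = (algebraMap ℚ_[p] E ((m.factorial : ℚ_[p])⁻¹)) •
          (fun z => emb p E ((descPochhammer ℤ_[p] m).eval z)) := rfl
  rw [hsmul, mahlerCoeff_smul, mahlerCoeff_eq_natFwdDiff]
  have hF : (fun k : ℕ => emb p E ((descPochhammer ℤ_[p] m).eval ((k : ℕ) : ℤ_[p])))
      = fun k : ℕ => ((((m.factorial : ℤ) • (fun x : ℕ => (x.choose m : ℤ))) k : ℤ) : E) := by
    funext k
    rw [descPochhammer_eval_eq_descFactorial, map_natCast,
      Nat.descFactorial_eq_factorial_mul_choose]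
    simp only [Pi.smul_apply, zsmul_eq_mul]
    push_cast
    ring
  rw [hF, fwdDiff_iter_intCast p E, fwdDiff_iter_const_smul, Pi.smul_apply,
    fwdDiff_iter_choose_zero]
  by_cases hnm : n = m
  · rw [if_pos hnm, if_pos hnm]
    have h1 : (((m.factorial : ℤ) • (1 : ℤ) : ℤ) : E) = algebraMap ℚ_[p] E (m.factorial : ℚ_[p]) := by
      push_cast [smul_eq_mul]
      simp [map_natCast]
    rw [h1, ← map_mul, inv_mul_cancel₀ (Nat.cast_ne_zero.mpr m.factorial_ne_zero), map_one]
  · rw [if_neg hnm, if_neg hnm]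
    simp

/-- A uniform bound for `(q+1)^r p^{-q}`. -/
noncomputable def CrBound (r : ℝ) : ℝ := ⨆ u : ℕ, ((u : ℝ) + 1) ^ r * ((p : ℝ)⁻¹) ^ u

include p in
lemma tendsto_crSeq (r : ℝ) (hr : 0 ≤ r) :
    Tendsto (fun u : ℕ => ((u : ℝ) + 1) ^ r * ((p : ℝ)⁻¹) ^ u) atTop (nhds 0) := by
  have hp1 : (1 : ℝ) < (p : ℝ) := by exact_mod_cast (Fact.out (p := p.Prime)).one_lt
  have hp0 : (0 : ℝ) < (p : ℝ) := lt_trans zero_lt_one hp1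
  have hinv : (p : ℝ)⁻¹ < 1 := by
    rw [inv_lt_one_iff₀]
    exact Or.inr hp1
  have hinv0 : (0 : ℝ) ≤ (p : ℝ)⁻¹ := by positivity
  set k : ℕ := ⌈r⌉₊ with hk
  have h1 : Tendsto (fun u : ℕ => ((u : ℝ)) ^ k * ((p : ℝ)⁻¹) ^ u) atTop (nhds 0) := by
    have hsum : Summable (fun u : ℕ => ((u : ℝ)) ^ k * ((p : ℝ)⁻¹) ^ u) := by
      refine summable_pow_mul_geometric_of_norm_lt_one k ?_
      rw [Real.norm_eq_abs, abs_of_nonneg hinv0]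
      exact hinv
    exact hsum.tendsto_atTop_zero
  have h2 : Tendsto (fun u : ℕ => (((u + 1 : ℕ) : ℝ)) ^ k * ((p : ℝ)⁻¹) ^ (u + 1)) atTop
      (nhds 0) := by
    exact (Filter.tendsto_add_atTop_iff_nat 1).mpr h1
  have h3 : Tendsto (fun u : ℕ => (((u + 1 : ℕ) : ℝ)) ^ k * ((p : ℝ)⁻¹) ^ (u + 1) * (p : ℝ))
      atTop (nhds 0) := by
    simpa using h2.mul_const (p : ℝ)
  refine squeeze_zero (fun u => by positivity) (fun u => ?_) h3
  have hb : ((u : ℝ) + 1) ^ r ≤ ((u : ℝ) + 1) ^ (k : ℕ) := by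
    rw [← Real.rpow_natCast ((u : ℝ) + 1) k]
    refine Real.rpow_le_rpow_of_exponent_le (by linarith [Nat.cast_nonneg (α := ℝ) u]) ?_
    exact Nat.le_ceil r
  calc ((u : ℝ) + 1) ^ r * ((p : ℝ)⁻¹) ^ u
      ≤ ((u : ℝ) + 1) ^ (k : ℕ) * ((p : ℝ)⁻¹) ^ u := by
        refine mul_le_mul_of_nonneg_right hb (by positivity)
    _ = (((u + 1 : ℕ) : ℝ)) ^ k * ((p : ℝ)⁻¹) ^ (u + 1) * (p : ℝ) := by
        push_cast
        field_simp
        rw [pow_succ, mul_comm (p : ℝ), mul_assoc, one_div, inv_mul_cancel₀ hp0.ne', mul_one]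
    _ ≤ _ := le_refl _

include p in
lemma le_crBound (r : ℝ) (hr : 0 ≤ r) (u : ℕ) :
    ((u : ℝ) + 1) ^ r * ((p : ℝ)⁻¹) ^ u ≤ CrBound p r :=
  le_ciSup (tendsto_crSeq p r hr).bddAbove_range u

include p in
lemma crBound_nonneg (r : ℝ) (hr : 0 ≤ r) : 0 ≤ CrBound p r := by
  refine le_trans ?_ (le_crBound p r hr 0)
  positivity

include p in
/-- The numerical estimate combining everything. -/
lemma numeric_bound (r : ℝ) (hr : 0 ≤ r) (d m N n j : ℕ) (hj1 : d + 1 ≤ j) (hj2 : j ≤ m) :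
    ((n : ℝ) + 1) ^ r * ((p : ℝ) ^ ((j : ℤ) - (n / p ^ N : ℕ)) * ((p : ℝ) ^ (-(N : ℤ))) ^ j)
      ≤ CrBound p r * (p : ℝ) ^ ((m : ℝ)) * ((p : ℝ) ^ (r - ((d : ℝ) + 1))) ^ N := by
  have hp1 : (1 : ℝ) < (p : ℝ) := by exact_mod_cast (Fact.out (p := p.Prime)).one_lt
  have hp0 : (0 : ℝ) < (p : ℝ) := lt_trans zero_lt_one hp1
  set P : ℕ := p ^ N with hPdef
  have hP : 0 < P := pow_pos (Fact.out (p := p.Prime)).pos N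
  set q : ℕ := n / P with hq
  -- convert the `zpow`s to `rpow`s
  have e1 : (p : ℝ) ^ ((j : ℤ) - (q : ℕ)) = (p : ℝ) ^ (((j : ℝ) - (q : ℝ)) : ℝ) := by
    rw [show (((j : ℝ) - (q : ℝ)) : ℝ) = (((j : ℤ) - (q : ℕ) : ℤ) : ℝ) by push_cast; ring,
      Real.rpow_intCast]
  have e2 : ((p : ℝ) ^ (-(N : ℤ))) ^ j = (p : ℝ) ^ ((-(((N : ℝ)) * j)) : ℝ) := by
    rw [← zpow_natCast ((p : ℝ) ^ (-(N : ℤ))) j, ← zpow_mul,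
      show (-(N : ℤ) * (j : ℕ) : ℤ) = ((-((N : ℤ) * j)) : ℤ) by ring, ← Real.rpow_intCast]
    congr 1
    push_cast
    ring
  have e3 : ((p : ℝ) ^ (r - ((d : ℝ) + 1))) ^ N = (p : ℝ) ^ ((r - ((d : ℝ) + 1)) * N) := by
    rw [Real.rpow_mul hp0.le, Real.rpow_natCast]
  -- bound (n+1)^r
  have hn1 : (n : ℝ) + 1 ≤ (P : ℝ) * ((q : ℝ) + 1) := by
    have h1 : P * q + n % P = n := Nat.div_add_mod n P
    have h2 : n % P < P := Nat.mod_lt _ hP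
    have : n + 1 ≤ P * (q + 1) := by
      rw [Nat.mul_succ]
      omega
    exact_mod_cast this
  have hCn : ((n : ℝ) + 1) ^ r ≤ (p : ℝ) ^ ((N : ℝ) * r) * ((q : ℝ) + 1) ^ r := by
    calc ((n : ℝ) + 1) ^ r ≤ ((P : ℝ) * ((q : ℝ) + 1)) ^ r := by
          refine Real.rpow_le_rpow (by positivity) hn1 hr
      _ = (P : ℝ) ^ r * ((q : ℝ) + 1) ^ r := by
          refine Real.mul_rpow (by positivity) (by positivity)
      _ = (p : ℝ) ^ ((N : ℝ) * r) * ((q : ℝ) + 1) ^ r := by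
          rw [hPdef]
          push_cast
          rw [← Real.rpow_natCast (p : ℝ) N, ← Real.rpow_mul hp0.le]
  -- put everything together
  rw [e1, e2, e3, ← Real.rpow_add hp0]
  have hq0 : ((p : ℝ)⁻¹) ^ q * (p : ℝ) ^ ((q : ℝ)) = 1 := by
    rw [Real.rpow_natCast, inv_pow]
    field_simp
  have hqB : ((q : ℝ) + 1) ^ r ≤ CrBound p r * (p : ℝ) ^ ((q : ℝ)) := by
    calc ((q : ℝ) + 1) ^ r = (((q : ℝ) + 1) ^ r * ((p : ℝ)⁻¹) ^ q) * (p : ℝ) ^ ((q : ℝ)) := by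
          rw [mul_assoc, hq0, mul_one]
      _ ≤ CrBound p r * (p : ℝ) ^ ((q : ℝ)) :=
          mul_le_mul_of_nonneg_right (le_crBound p r hr q) (by positivity)
  calc ((n : ℝ) + 1) ^ r * (p : ℝ) ^ ((j : ℝ) - (q : ℝ) + (-(((N : ℝ)) * j)))
      ≤ ((p : ℝ) ^ ((N : ℝ) * r) * (CrBound p r * (p : ℝ) ^ ((q : ℝ)))) *
          (p : ℝ) ^ ((j : ℝ) - (q : ℝ) + (-(((N : ℝ)) * j))) := by
        refine mul_le_mul_of_nonneg_right (le_trans hCn ?_) (by positivity)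
        exact mul_le_mul_of_nonneg_left hqB (by positivity)
    _ = CrBound p r *
          (p : ℝ) ^ ((N : ℝ) * r + ((q : ℝ) + ((j : ℝ) - (q : ℝ) + (-(((N : ℝ)) * j))))) := by
        rw [Real.rpow_add hp0 ((N : ℝ) * r), Real.rpow_add hp0 ((q : ℝ))]
        ring
    _ ≤ CrBound p r * (p : ℝ) ^ ((m : ℝ) + (r - ((d : ℝ) + 1)) * N) := by
        refine mul_le_mul_of_nonneg_left ?_ (crBound_nonneg p r hr)
        refine Real.rpow_le_rpow_of_exponent_le hp1.le ?_
        have hj1' : (d : ℝ) + 1 ≤ (j : ℝ) := by exact_mod_cast hj1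
        have hj2' : (j : ℝ) ≤ (m : ℝ) := by exact_mod_cast hj2
        have hN0 : (0 : ℝ) ≤ (N : ℝ) := Nat.cast_nonneg N
        nlinarith [mul_le_mul_of_nonneg_left hj1' hN0]
    _ = CrBound p r * (p : ℝ) ^ ((m : ℝ)) * (p : ℝ) ^ ((r - ((d : ℝ) + 1)) * N) := by
        rw [Real.rpow_add hp0, mul_assoc]

include p in
/-- Any "polynomial" function `z ↦ c • Q(z)` can be approximated in `‖·‖_r` by locally
polynomial functions of degree at most `d`, provided `r - 1 < d`. -/
lemma exists_locPoly_approx (r : ℝ) (hr : 0 ≤ r) (d : ℕ) (hd : r - 1 < (d : ℝ))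
    (Q : Polynomial ℤ_[p]) (c : E) (δ : ℝ) (hδ : 0 < δ) :
    ∃ T ∈ LocPoly p E d, ∀ n : ℕ,
      ((n : ℝ) + 1) ^ r * ‖mahlerCoeff p E ((fun z => c • emb p E (Q.eval z)) - T) n‖ ≤ δ := by
  haveI := ultraE p E
  have hp1 : (1 : ℝ) < (p : ℝ) := by exact_mod_cast (Fact.out (p := p.Prime)).one_lt
  have hp0 : (0 : ℝ) < (p : ℝ) := lt_trans zero_lt_one hp1
  set m : ℕ := Q.natDegree with hm
  have hρ1 : (p : ℝ) ^ (r - ((d : ℝ) + 1)) < 1 :=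
    Real.rpow_lt_one_of_one_lt_of_neg hp1 (by linarith)
  have hρ0 : (0 : ℝ) ≤ (p : ℝ) ^ (r - ((d : ℝ) + 1)) := Real.rpow_nonneg hp0.le _
  set A : ℝ := ‖c‖ * (CrBound p r * (p : ℝ) ^ ((m : ℝ))) with hA
  have htend : Tendsto (fun N : ℕ => A * ((p : ℝ) ^ (r - ((d : ℝ) + 1))) ^ N) atTop (nhds 0) := by
    simpa using (tendsto_pow_atTop_nhds_zero_of_lt_one hρ0 hρ1).const_mul A
  obtain ⟨N, hN⟩ := (htend.eventually_lt_const hδ).exists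
  set P : ℕ := p ^ N with hPdef
  have hP : 0 < P := pow_pos (Fact.out (p := p.Prime)).pos N
  set t : ℕ := min (d + 1) (m + 1) with htdef
  set co : ℕ → ℕ → E :=
    fun a j => c * emb p E ((Polynomial.taylor ((a : ℕ) : ℤ_[p]) Q).coeff j) with hco
  set T : ℤ_[p] → E :=
    ∑ a ∈ Finset.range P, ∑ j ∈ Finset.range t, co a j • indPoly p E ((a : ℕ) : ℤ_[p]) N j
    with hT
  set Err : ℤ_[p] → E :=
    ∑ a ∈ Finset.range P, ∑ j ∈ Finset.Ico t (m + 1), co a j • indPoly p E ((a : ℕ) : ℤ_[p]) N j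
    with hErr
  have hcollapse : ∀ (s : Finset ℕ) (z : ℤ_[p]),
      (∑ a ∈ Finset.range P, ∑ j ∈ s, co a j • indPoly p E ((a : ℕ) : ℤ_[p]) N j) z
        = ∑ j ∈ s, co (z.appr N) j * (emb p E (z - ((z.appr N : ℕ) : ℤ_[p]))) ^ j := by
    intro s z
    rw [Finset.sum_apply]
    rw [Finset.sum_eq_single (z.appr N)]
    · rw [Finset.sum_apply]
      refine Finset.sum_congr rfl fun j hj => ?_
      rw [Pi.smul_apply, smul_eq_mul]
      congr 1
      rw [indPoly, if_pos ((ball_cond_iff_appr p (PadicInt.appr_lt z N)).mpr rfl)]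
      rw [emb_apply, PadicInt.coe_sub]
    · intro a ha hane
      rw [Finset.sum_apply]
      refine Finset.sum_eq_zero fun j _ => ?_
      rw [Pi.smul_apply, indPoly,
        if_neg (fun hc => hane ((ball_cond_iff_appr p (Finset.mem_range.mp ha)).mp hc)),
        smul_zero]
    · intro hnot
      exact absurd (Finset.mem_range.mpr (PadicInt.appr_lt z N)) hnot
  have hfun : (fun z => c • emb p E (Q.eval z)) - T = Err := by
    funext z
    rw [Pi.sub_apply, hT, hErr, hcollapse, hcollapse]
    have hexp : c • emb p E (Q.eval z)
        = ∑ j ∈ Finset.range (m + 1),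
            co (z.appr N) j * (emb p E (z - ((z.appr N : ℕ) : ℤ_[p]))) ^ j := by
      have htay : Q.eval z
          = (Polynomial.taylor (((z.appr N : ℕ)) : ℤ_[p]) Q).eval (z - ((z.appr N : ℕ) : ℤ_[p])) :=
        (Polynomial.taylor_eval_sub _ Q z).symm
      have hdeg : (Polynomial.taylor (((z.appr N : ℕ)) : ℤ_[p]) Q).natDegree < m + 1 := by
        rw [Polynomial.natDegree_taylor]
        omega
      rw [htay, Polynomial.eval_eq_sum_range' hdeg, map_sum, smul_eq_mul, Finset.mul_sum]
      refine Finset.sum_congr rfl fun j _ => ?_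
      rw [map_mul, map_pow, hco]
      ring
    have hsplit : ∑ j ∈ Finset.range t,
          co (z.appr N) j * (emb p E (z - ((z.appr N : ℕ) : ℤ_[p]))) ^ j
        + ∑ j ∈ Finset.Ico t (m + 1),
            co (z.appr N) j * (emb p E (z - ((z.appr N : ℕ) : ℤ_[p]))) ^ j
        = ∑ j ∈ Finset.range (m + 1),
            co (z.appr N) j * (emb p E (z - ((z.appr N : ℕ) : ℤ_[p]))) ^ j := by
      exact Finset.sum_range_add_sum_Ico _ (by omega)
    rw [hexp, ← hsplit]
    ring
  refine ⟨T, ?_, ?_⟩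
  · rw [hT]
    refine Submodule.sum_mem _ fun a _ => Submodule.sum_mem _ fun j hj => Submodule.smul_mem _ _ ?_
    refine Submodule.subset_span ⟨((a : ℕ) : ℤ_[p]), N, j, ?_, rfl⟩
    have := Finset.mem_range.mp hj
    omega
  · intro n
    rw [hfun]
    set Cn : ℝ := ((n : ℝ) + 1) ^ r with hCn
    have hCn0 : 0 < Cn := Real.rpow_pos_of_pos (by positivity) r
    have hmc : mahlerCoeff p E Err n
        = ∑ a ∈ Finset.range P, ∑ j ∈ Finset.Ico t (m + 1),
            co a j * mahlerCoeff p E (indPoly p E ((a : ℕ) : ℤ_[p]) N j) n := by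
      rw [hErr, mahlerCoeff_sum]
      refine Finset.sum_congr rfl fun a _ => ?_
      rw [mahlerCoeff_sum]
      exact Finset.sum_congr rfl fun j _ => mahlerCoeff_smul p E _ _ n
    have hterm : ∀ a ∈ Finset.range P, ∀ j ∈ Finset.Ico t (m + 1),
        ‖co a j * mahlerCoeff p E (indPoly p E ((a : ℕ) : ℤ_[p]) N j) n‖ ≤ δ / Cn := by
      intro a _ j hj
      obtain ⟨hj1, hj2⟩ := Finset.mem_Ico.mp hj
      have hjd : d + 1 ≤ j := by omega
      have hjm : j ≤ m := by omega
      rw [le_div_iff₀ hCn0]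
      have h1 : ‖co a j‖ ≤ ‖c‖ := by
        rw [hco, norm_mul, norm_emb]
        calc ‖c‖ * ‖(Polynomial.taylor ((a : ℕ) : ℤ_[p]) Q).coeff j‖ ≤ ‖c‖ * 1 :=
              mul_le_mul_of_nonneg_left (PadicInt.norm_le_one _) (norm_nonneg c)
          _ = ‖c‖ := mul_one _
      have h2 := norm_mahlerCoeff_indPoly_le p E ((a : ℕ) : ℤ_[p]) N j n
      have h3 := numeric_bound p r hr d m N n j hjd hjm
      have hKnn : (0:ℝ) ≤ (p : ℝ) ^ ((j : ℤ) - (n / p ^ N : ℕ)) * ((p : ℝ) ^ (-(N : ℤ))) ^ j := by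
        positivity
      calc ‖co a j * mahlerCoeff p E (indPoly p E ((a : ℕ) : ℤ_[p]) N j) n‖ * Cn
          = Cn * (‖co a j‖ * ‖mahlerCoeff p E (indPoly p E ((a : ℕ) : ℤ_[p]) N j) n‖) := by
            rw [norm_mul]; ring
        _ ≤ Cn * (‖c‖ * ((p : ℝ) ^ ((j : ℤ) - (n / p ^ N : ℕ)) * ((p : ℝ) ^ (-(N : ℤ))) ^ j)) := by
            refine mul_le_mul_of_nonneg_left ?_ hCn0.le
            exact mul_le_mul h1 h2 (norm_nonneg _) (norm_nonneg c)
        _ = ‖c‖ * (Cn * ((p : ℝ) ^ ((j : ℤ) - (n / p ^ N : ℕ)) * ((p : ℝ) ^ (-(N : ℤ))) ^ j)) := by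
            ring
        _ ≤ ‖c‖ * (CrBound p r * (p : ℝ) ^ ((m : ℝ)) * ((p : ℝ) ^ (r - ((d : ℝ) + 1))) ^ N) := by
            refine mul_le_mul_of_nonneg_left ?_ (norm_nonneg c)
            rw [hCn]
            exact h3
        _ = A * ((p : ℝ) ^ (r - ((d : ℝ) + 1))) ^ N := by rw [hA]; ring
        _ ≤ δ := hN.le
    have hs : ‖mahlerCoeff p E Err n‖ ≤ δ / Cn := by
      rw [hmc]
      refine IsUltrametricDist.norm_sum_le_of_forall_le_of_nonneg (by positivity) fun a ha => ?_
      exact IsUltrametricDist.norm_sum_le_of_forall_le_of_nonneg (by positivity)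
        fun j hj => hterm a ha j hj
    calc Cn * ‖mahlerCoeff p E Err n‖ ≤ Cn * (δ / Cn) :=
          mul_le_mul_of_nonneg_left hs hCn0.le
      _ = δ := by field_simp

/-- If `d > r - 1`, locally polynomial functions of degree at most `d` are dense in
`C^r(ℤ_p, E)` for the norm `‖·‖_r`. -/
theorem locPoly_dense (r : ℝ) (hr : 0 ≤ r) (d : ℕ) (hd : r - 1 < (d : ℝ)) :
    ∀ f : ℤ_[p] → E, IsCr p E r f → ∀ ε : ℝ, 0 < ε →
      ∃ g ∈ LocPoly p E d, crNorm p E r (f - g) < ε := by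
  haveI := ultraE p E
  intro f hf ε hε
  -- `(n+1)^r ‖a_n(f)‖ → 0`
  have h2 : Tendsto (fun n : ℕ => ((n : ℝ) + 1) ^ r * ‖mahlerCoeff p E f n‖) atTop (nhds 0) := by
    have hg : Tendsto (fun n : ℕ => (2 : ℝ) ^ r * ((n : ℝ) ^ r * ‖mahlerCoeff p E f n‖)) atTop
        (nhds 0) := by
      simpa using hf.const_mul ((2 : ℝ) ^ r)
    refine squeeze_zero' ?_ ?_ hg
    · filter_upwards with n
      positivity
    · filter_upwards [eventually_ge_atTop 1] with n hn
      have h1n : (1 : ℝ) ≤ (n : ℝ) := by exact_mod_cast hn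
      have hle : ((n : ℝ) + 1) ^ r ≤ ((2 : ℝ) * (n : ℝ)) ^ r :=
        Real.rpow_le_rpow (by positivity) (by linarith) hr
      calc ((n : ℝ) + 1) ^ r * ‖mahlerCoeff p E f n‖
          ≤ ((2 : ℝ) * (n : ℝ)) ^ r * ‖mahlerCoeff p E f n‖ :=
            mul_le_mul_of_nonneg_right hle (norm_nonneg _)
        _ = (2 : ℝ) ^ r * ((n : ℝ) ^ r * ‖mahlerCoeff p E f n‖) := by
            rw [Real.mul_rpow (by norm_num) (by positivity)]
            ring
  obtain ⟨M, hM⟩ : ∃ M : ℕ, ∀ n, M ≤ n → ((n : ℝ) + 1) ^ r * ‖mahlerCoeff p E f n‖ ≤ ε / 2 := by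
    have hev := h2.eventually_lt_const (by linarith : (0 : ℝ) < ε / 2)
    obtain ⟨M, hM⟩ := eventually_atTop.mp hev
    exact ⟨M, fun n hn => (hM n hn).le⟩
  set b : ℕ → E := fun k => mahlerCoeff p E f k with hb
  set B : ℝ := 1 + ∑ k ∈ Finset.range M, ‖b k‖ with hB
  have hsum0 : 0 ≤ ∑ k ∈ Finset.range M, ‖b k‖ :=
    Finset.sum_nonneg fun k _ => norm_nonneg _
  have hB0 : 0 < B := by rw [hB]; linarith
  have hbB : ∀ k ∈ Finset.range M, ‖b k‖ ≤ B := by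
    intro k hk
    have := Finset.single_le_sum (f := fun k => ‖b k‖) (fun i _ => norm_nonneg _) hk
    rw [hB]
    linarith
  set δ : ℝ := ε / (2 * B) with hδdef
  have hδ0 : 0 < δ := by positivity
  have hex : ∀ k : ℕ, ∃ T ∈ LocPoly p E d, ∀ n : ℕ,
      ((n : ℝ) + 1) ^ r * ‖mahlerCoeff p E (binomE p E k - T) n‖ ≤ δ := by
    intro k
    exact exists_locPoly_approx p E r hr d hd (descPochhammer ℤ_[p] k)
      (algebraMap ℚ_[p] E ((k.factorial : ℚ_[p])⁻¹)) δ hδ0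
  choose T hTmem hTb using hex
  set g : ℤ_[p] → E := ∑ k ∈ Finset.range M, b k • T k with hg
  refine ⟨g, ?_, ?_⟩
  · rw [hg]
    exact Submodule.sum_mem _ fun k _ => Submodule.smul_mem _ _ (hTmem k)
  · set S : ℤ_[p] → E := ∑ k ∈ Finset.range M, b k • binomE p E k with hS
    have hsub : ∑ k ∈ Finset.range M, b k • (binomE p E k - T k) = S - g := by
      rw [hS, hg, ← Finset.sum_sub_distrib]
      exact Finset.sum_congr rfl fun k _ => smul_sub _ _ _
    have hdecomp : f - g = (f - S) + ∑ k ∈ Finset.range M, b k • (binomE p E k - T k) := by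
      rw [hsub]
      abel
    have hfinal : crNorm p E r (f - g) ≤ ε / 2 := by
      refine crNorm_le p E (by linarith) fun n => ?_
      rw [hdecomp, mahlerCoeff_add]
      set Cn : ℝ := ((n : ℝ) + 1) ^ r with hCn
      have hCn0 : 0 < Cn := Real.rpow_pos_of_pos (by positivity) r
      have hn1 : Cn * ‖mahlerCoeff p E (f - S) n‖ ≤ ε / 2 := by
        have hmS : mahlerCoeff p E S n = if n ∈ Finset.range M then b n else 0 := by
          rw [hS, mahlerCoeff_sum]
          rw [show (∑ k ∈ Finset.range M, mahlerCoeff p E (b k • binomE p E k) n)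
              = ∑ k ∈ Finset.range M, if n = k then b k else 0 from
            Finset.sum_congr rfl fun k _ => by
              rw [mahlerCoeff_smul, mahlerCoeff_binomE, mul_ite, mul_one, mul_zero]]
          exact Finset.sum_ite_eq _ _ _
        rw [mahlerCoeff_sub, hmS]
        by_cases hnM : n ∈ Finset.range M
        · rw [if_pos hnM, hb, sub_self, norm_zero, mul_zero]
          linarith
        · rw [if_neg hnM, sub_zero]
          exact hM n (by simp only [Finset.mem_range, not_lt] at hnM; exact hnM)
      have hn2 : Cn * ‖mahlerCoeff p E (∑ k ∈ Finset.range M, b k • (binomE p E k - T k)) n‖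
          ≤ ε / 2 := by
        have hmc : mahlerCoeff p E (∑ k ∈ Finset.range M, b k • (binomE p E k - T k)) n
            = ∑ k ∈ Finset.range M, b k * mahlerCoeff p E (binomE p E k - T k) n := by
          rw [mahlerCoeff_sum]
          exact Finset.sum_congr rfl fun k _ => mahlerCoeff_smul p E _ _ n
        rw [hmc]
        have hterm : ∀ k ∈ Finset.range M,
            ‖b k * mahlerCoeff p E (binomE p E k - T k) n‖ ≤ (ε / 2) / Cn := by
          intro k hk
          rw [le_div_iff₀ hCn0, norm_mul]
          calc ‖b k‖ * ‖mahlerCoeff p E (binomE p E k - T k) n‖ * Cn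
              = ‖b k‖ * (Cn * ‖mahlerCoeff p E (binomE p E k - T k) n‖) := by ring
            _ ≤ B * δ := by
                refine mul_le_mul (hbB k hk) (hTb k n) ?_ hB0.le
                positivity
            _ = ε / 2 := by
                rw [hδdef]
                have hBne : B ≠ 0 := hB0.ne'
                field_simp
        have hssum : ‖∑ k ∈ Finset.range M, b k * mahlerCoeff p E (binomE p E k - T k) n‖
            ≤ (ε / 2) / Cn :=
          IsUltrametricDist.norm_sum_le_of_forall_le_of_nonneg (by positivity) hterm
        calc Cn * ‖∑ k ∈ Finset.range M, b k * mahlerCoeff p E (binomE p E k - T k) n‖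
            ≤ Cn * ((ε / 2) / Cn) := mul_le_mul_of_nonneg_left hssum hCn0.le
          _ = ε / 2 := by
              field_simp
      calc Cn * ‖mahlerCoeff p E (f - S) n
            + mahlerCoeff p E (∑ k ∈ Finset.range M, b k • (binomE p E k - T k)) n‖
          ≤ Cn * max ‖mahlerCoeff p E (f - S) n‖
              ‖mahlerCoeff p E (∑ k ∈ Finset.range M, b k • (binomE p E k - T k)) n‖ :=
            mul_le_mul_of_nonneg_left (IsUltrametricDist.norm_add_le_max _ _) hCn0.le
        _ ≤ ε / 2 := by
            rcases max_cases ‖mahlerCoeff p E (f - S) n‖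
              ‖mahlerCoeff p E (∑ k ∈ Finset.range M, b k • (binomE p E k - T k)) n‖ with
              ⟨hmx, _⟩ | ⟨hmx, _⟩ <;> rw [hmx]
            · exact hn1
            · exact hn2
    calc crNorm p E r (f - g) ≤ ε / 2 := hfinal
      _ < ε := by linarith
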